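/- arXiv:0909.3443 — 4 statements merged into one kernel-verified Lean document; each statement's English description precedes it below -/
import Mathlib

section
/- Let w : ℝⁿ → ℝ be a C² convex function, x₀ ∈ ℝⁿ, r > 0, c > 0 and δ > 0. Suppose that det(D²w(x)) ≥ c for all x in the closed ball B̄(x₀, r), and that w(x) ≤ w(x₀) + δ for all x ∈ B̄(x₀, r). Then r² ≤ 2δ · c^{-1/n}. -/
open MeasureTheory Set Metric Filter Topology InnerProductSpace

section Aux

/-- Derivative of a monotone function is nonnegative. -/
lemma MAaux.monotone_deriv_nonneg' {m : ℝ → ℝ} (hm : Monotone m) {t : ℝ}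
    (hd : DifferentiableAt ℝ m t) : 0 ≤ deriv m t := by
  have h := hasDerivAt_iff_tendsto_slope.mp hd.hasDerivAt
  have h' : Tendsto (slope m t) (𝓝[>] t) (𝓝 (deriv m t)) :=
    h.mono_left (nhdsWithin_mono t fun y hy => ne_of_gt hy)
  refine ge_of_tendsto h' ?_
  filter_upwards [self_mem_nhdsWithin] with y hy
  have : t < y := hy
  rw [slope_def_field]
  exact div_nonneg (by simpa using sub_nonneg.mpr (hm this.le)) (sub_nonneg.mpr this.le)

lemma MAaux.contDiff_deriv_of_two {g : ℝ → ℝ} (hg : ContDiff ℝ 2 g) :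
    ContDiff ℝ 1 (deriv g) := by
  have : ContDiff ℝ (1+1) g := by exact_mod_cast hg
  exact (contDiff_succ_iff_deriv.mp this).2.2

/-- Second derivative test at a local minimum. -/
lemma MAaux.secondDeriv_nonneg_of_isLocalMin {g : ℝ → ℝ} (hg : ContDiff ℝ 2 g) {t : ℝ}
    (h : IsLocalMin g t) : 0 ≤ deriv (deriv g) t := by
  by_contra hlt
  push_neg at hlt
  have hg1 : ContDiff ℝ 1 (deriv g) := MAaux.contDiff_deriv_of_two hg
  have hd0 : deriv g t = 0 := h.deriv_eq_zero
  have hda : HasDerivAt (deriv g) (deriv (deriv g) t) t :=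
    ((hg1.differentiable one_ne_zero) t).hasDerivAt
  have hs := hasDerivAt_iff_tendsto_slope.mp hda
  have hev : ∀ᶠ y in 𝓝[<] t, 0 < deriv g y := by
    have h1 : Tendsto (slope (deriv g) t) (𝓝[<] t) (𝓝 (deriv (deriv g) t)) :=
      hs.mono_left (nhdsWithin_mono t fun y hy => ne_of_lt hy)
    have h2 : ∀ᶠ y in 𝓝[<] t, slope (deriv g) t y < 0 :=
      h1.eventually (eventually_lt_nhds hlt)
    filter_upwards [h2, self_mem_nhdsWithin] with y hy hy'
    have hyt : y < t := hy'
    rw [slope_def_field, hd0, sub_zero] at hy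
    rcases div_neg_iff.mp hy with ⟨h1', h2'⟩ | ⟨h1', h2'⟩
    · linarith [sub_neg.mpr hyt]
    · linarith
  have hminev : ∀ᶠ y in 𝓝[<] t, 0 < deriv g y ∧ g t ≤ g y :=
    hev.and (h.filter_mono nhdsWithin_le_nhds)
  obtain ⟨y₀, hy₀t, hsub⟩ := mem_nhdsLT_iff_exists_Ioo_subset.mp hminev
  have hy₀t' : y₀ < t := hy₀t
  set y := (y₀ + t) / 2 with hy
  have hyI : y ∈ Ioo y₀ t := ⟨by simp only [hy]; linarith, by simp only [hy]; linarith⟩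
  have hmono : StrictMonoOn g (Icc y t) := by
    apply strictMonoOn_of_deriv_pos (convex_Icc y t) (hg.continuous.continuousOn)
    intro z hz
    rw [interior_Icc] at hz
    exact (hsub ⟨lt_trans hyI.1 hz.1, hz.2⟩).1
  have h1 : g y < g t := hmono ⟨le_refl y, hyI.2.le⟩ ⟨hyI.2.le, le_refl t⟩ hyI.2
  have h2 : g t ≤ g y := (hsub hyI).2
  linarith

/-- A `C²` convex function on `ℝ` has nonnegative second derivative. -/
lemma MAaux.convex_secondDeriv_nonneg {g : ℝ → ℝ} (hg : ContDiff ℝ 2 g)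
    (hc : ConvexOn ℝ Set.univ g) (t : ℝ) : 0 ≤ deriv (deriv g) t := by
  have hgd : Differentiable ℝ g := hg.differentiable (by norm_num)
  have hmono : Monotone (deriv g) := by
    have := hc.monotoneOn_deriv (fun x _ => hgd x)
    rwa [monotoneOn_univ] at this
  exact MAaux.monotone_deriv_nonneg' hmono
    ((MAaux.contDiff_deriv_of_two hg).differentiable one_ne_zero t)

/-- A symmetric endomorphism whose quadratic form lies between `0` and `a‖·‖²` has
determinant at most `aⁿ`. -/
lemma MAaux.det_le_pow_of_quadform {n : ℕ} {E : Type*} [NormedAddCommGroup E]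
    [InnerProductSpace ℝ E] [FiniteDimensional ℝ E] (hrank : Module.finrank ℝ E = n)
    {T : E →ₗ[ℝ] E} (hT : T.IsSymmetric) {a : ℝ}
    (h0 : ∀ v : E, (0:ℝ) ≤ inner ℝ (T v) v) (ha : ∀ v : E, (inner ℝ (T v) v : ℝ) ≤ a * ‖v‖ ^ 2) :
    LinearMap.det T ≤ a ^ n := by
  classical
  set b := hT.eigenvectorBasis hrank
  set μ := hT.eigenvalues hrank with hμ
  have happ : ∀ i, T (b i) = μ i • b i := fun i => hT.apply_eigenvectorBasis hrank i
  have hnorm : ∀ i, ‖b i‖ = 1 := fun i => b.orthonormal.1 i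
  have hquad : ∀ i, (inner ℝ (T (b i)) (b i) : ℝ) = μ i := by
    intro i
    rw [happ i, real_inner_smul_left, real_inner_self_eq_norm_sq, hnorm i]
    ring
  have h0' : ∀ i, 0 ≤ μ i := fun i => (hquad i) ▸ h0 (b i)
  have ha' : ∀ i, μ i ≤ a := by
    intro i
    have := ha (b i)
    rwa [hquad i, hnorm i, one_pow, mul_one] at this
  have hdet : LinearMap.det T = ∏ i, μ i := by
    rw [← LinearMap.det_toMatrix b.toBasis]
    have : LinearMap.toMatrix b.toBasis b.toBasis T = Matrix.diagonal μ := by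
      ext i j
      rw [LinearMap.toMatrix_apply, OrthonormalBasis.coe_toBasis, happ j, _root_.map_smul]
      by_cases hij : i = j
      · subst hij; simp [Matrix.diagonal]
      · simp [Matrix.diagonal, hij, Module.Basis.repr_self, Finsupp.single_apply, Ne.symm hij]
    rw [this, Matrix.det_diagonal]
  rw [hdet]
  calc ∏ i, μ i ≤ ∏ _i : Fin n, a := Finset.prod_le_prod (fun i _ => h0' i) (fun i _ => ha' i)
  _ = a ^ n := by simp

variable {E : Type*} [NormedAddCommGroup E] [InnerProductSpace ℝ E] [CompleteSpace E]

lemma MAaux.gradient_differentiable {w : E → ℝ} (hw : ContDiff ℝ 2 w) :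
    Differentiable ℝ (gradient w) := by
  have h1 : ContDiff ℝ 1 (fderiv ℝ w) := hw.fderiv_right (by norm_num)
  have h2 : gradient w = (toDual ℝ E).symm ∘ fderiv ℝ w := rfl
  rw [h2]
  exact ((toDual ℝ E).symm.toContinuousLinearEquiv.differentiable).comp
    (h1.differentiable one_ne_zero)

lemma MAaux.fderiv_eq_inner_gradient {w : E → ℝ} (y v : E) :
    fderiv ℝ w y v = inner ℝ (gradient w y) v := by
  rw [gradient]
  exact toDual_symm_apply.symm

lemma MAaux.inner_fderiv_gradient {w : E → ℝ} (x u v : E) :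
    (inner ℝ ((fderiv ℝ (gradient w) x) u) v : ℝ) = fderiv ℝ (fderiv ℝ w) x u v := by
  have h2 : gradient w = (toDual ℝ E).symm ∘ fderiv ℝ w := rfl
  rw [h2, LinearIsometryEquiv.comp_fderiv]
  simp only [ContinuousLinearMap.coe_comp', Function.comp_apply,
    LinearIsometryEquiv.coe_coe'']
  rw [toDual_symm_apply]

/-- The Hessian (as derivative of the gradient) of a `C²` function is symmetric. -/
lemma MAaux.gradient_fderiv_isSymmetric {w : E → ℝ} (hw : ContDiff ℝ 2 w) (x : E) :
    (fderiv ℝ (gradient w) x).toLinearMap.IsSymmetric := by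
  intro u v
  have hsym : IsSymmSndFDerivAt ℝ w x := hw.contDiffAt.isSymmSndFDerivAt (by simp)
  simp only [ContinuousLinearMap.coe_coe]
  rw [MAaux.inner_fderiv_gradient, real_inner_comm, MAaux.inner_fderiv_gradient, hsym u v]

lemma MAaux.hasDerivAt_line (x h : E) (t : ℝ) :
    HasDerivAt (fun s : ℝ => x + s • h) h t := by
  simpa using ((hasDerivAt_id t).smul_const h).const_add x

/-- Second derivative of the comparison function along a line. -/
lemma MAaux.deriv2_full {w : E → ℝ} (hw : ContDiff ℝ 2 w) (x₀ x h : E) (a C : ℝ) :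
    deriv (deriv (fun t : ℝ =>
        a / 2 * inner ℝ (x + t • h - x₀) (x + t • h - x₀) + C - w (x + t • h))) 0
      = a * ‖h‖ ^ 2 - inner ℝ ((fderiv ℝ (gradient w) x) h) h := by
  have hg : ∀ t : ℝ, HasDerivAt (fun s : ℝ => x + s • h - x₀) h t :=
    fun t => (MAaux.hasDerivAt_line x h t).sub_const x₀
  set p : ℝ → ℝ := fun t =>
    a * inner ℝ (x + t • h - x₀) h - inner ℝ (gradient w (x + t • h)) h with hp_def
  have hφ : ∀ t : ℝ, HasDerivAt (fun s : ℝ =>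
      a / 2 * inner ℝ (x + s • h - x₀) (x + s • h - x₀) + C - w (x + s • h)) (p t) t := by
    intro t
    have hq : HasDerivAt (fun s : ℝ => (inner ℝ (x + s • h - x₀) (x + s • h - x₀) : ℝ))
        (inner ℝ (x + t • h - x₀) h + inner ℝ h (x + t • h - x₀)) t :=
      HasDerivAt.inner ℝ (hg t) (hg t)
    have hw' : HasDerivAt (fun s : ℝ => w (x + s • h))
        (inner ℝ (gradient w (x + t • h)) h) t := by
      have := ((hw.differentiable (by norm_num) (x + t • h)).hasFDerivAt).comp_hasDerivAt
        t (MAaux.hasDerivAt_line x h t)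
      rw [MAaux.fderiv_eq_inner_gradient] at this
      exact this
    have := ((hq.const_mul (a / 2)).add_const C).sub hw'
    refine this.congr_deriv ?_
    rw [hp_def]
    simp only
    rw [real_inner_comm h (x + t • h - x₀)]
    ring
  have hderiv : deriv (fun s : ℝ =>
      a / 2 * inner ℝ (x + s • h - x₀) (x + s • h - x₀) + C - w (x + s • h)) = p :=
    funext fun t => (hφ t).deriv
  rw [hderiv]
  have h1 : HasDerivAt (fun t : ℝ => (inner ℝ (x + t • h - x₀) h : ℝ)) (inner ℝ h h) 0 := by
    have := HasDerivAt.inner ℝ (hg 0) (hasDerivAt_const (0:ℝ) h)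
    simpa using this
  have hgrad : HasDerivAt (fun t : ℝ => gradient w (x + t • h))
      ((fderiv ℝ (gradient w) x) h) 0 := by
    have h0 : HasFDerivAt (gradient w) (fderiv ℝ (gradient w) x) (x + (0:ℝ) • h) := by
      rw [show x + (0:ℝ) • h = x by simp]
      exact (MAaux.gradient_differentiable hw x).hasFDerivAt
    exact h0.comp_hasDerivAt 0 (MAaux.hasDerivAt_line x h 0)
  have h2 : HasDerivAt (fun t : ℝ => (inner ℝ (gradient w (x + t • h)) h : ℝ))
      ((inner ℝ ((fderiv ℝ (gradient w) x) h) h : ℝ)) 0 := by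
    have := HasDerivAt.inner ℝ hgrad (hasDerivAt_const (0:ℝ) h)
    simpa using this
  have := (h1.const_mul a).sub h2
  rw [real_inner_self_eq_norm_sq] at this
  exact this.deriv

end Aux

/-- Let `w` be a `C²` convex function on `ℝⁿ` (`n ≥ 1`), `x₀ ∈ ℝⁿ`,
`r > 0`, `c > 0`, `δ > 0`.  If `det D²w ≥ c` on the closed ball `B̄(x₀, r)` and
`w ≤ w x₀ + δ` on `B̄(x₀, r)`, then `r² ≤ 2δ · c^{-1/n}`.  (Comparison principle for
the real Monge–Ampère operator.) -/
theorem monge_ampere_comparison_radius_bound {n : ℕ} (hn : 0 < n)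
    (w : EuclideanSpace ℝ (Fin n) → ℝ) (hw : ContDiff ℝ 2 w)
    (hconv : ConvexOn ℝ Set.univ w)
    (x₀ : EuclideanSpace ℝ (Fin n)) (r c δ : ℝ)
    (hr : 0 < r) (hc : 0 < c) (hδ : 0 < δ)
    (hdet : ∀ x ∈ Metric.closedBall x₀ r,
      c ≤ LinearMap.det (fderiv ℝ (gradient w) x).toLinearMap)
    (hbound : ∀ x ∈ Metric.closedBall x₀ r, w x ≤ w x₀ + δ) :
    r ^ 2 ≤ 2 * δ * c ^ (-1 / (n : ℝ)) := by
  -- Step 1: the comparison estimate for every admissible slope `a`.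
  have key : ∀ a : ℝ, 0 < a → a ^ n < c → a * r ^ 2 ≤ 2 * δ := by
    intro a ha han
    set C : ℝ := w x₀ + δ - a / 2 * r ^ 2 with hC
    set f : EuclideanSpace ℝ (Fin n) → ℝ := fun x => a / 2 * inner ℝ (x - x₀) (x - x₀) + C - w x with hf
    have hfcont : Continuous f := by
      apply Continuous.sub
      · exact (continuous_const.mul ((continuous_id.sub continuous_const).inner
          (continuous_id.sub continuous_const))).add continuous_const
      · exact hw.continuous
    obtain ⟨x₁, hx₁, hmin⟩ := (isCompact_closedBall x₀ r).exists_isMinOn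
      ⟨x₀, mem_closedBall_self hr.le⟩ hfcont.continuousOn
    have hfx₁ : 0 ≤ f x₁ := by
      by_contra hneg
      push_neg at hneg
      -- x₁ is an interior point
      have hdist : dist x₁ x₀ < r := by
        rcases lt_or_eq_of_le (mem_closedBall.mp hx₁) with h | h
        · exact h
        · exfalso
          have hib : (inner ℝ (x₁ - x₀) (x₁ - x₀) : ℝ) = r ^ 2 := by
            rw [real_inner_self_eq_norm_sq, ← dist_eq_norm, h]
          have : f x₁ = w x₀ + δ - w x₁ := by rw [hf]; simp only; rw [hib, hC]; ring
          have := hbound x₁ hx₁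
          rw [‹f x₁ = w x₀ + δ - w x₁›] at hneg
          linarith
      have hlocal : IsLocalMin f x₁ := hmin.isLocalMin
        (mem_nhds_iff.mpr ⟨ball x₀ r, ball_subset_closedBall, isOpen_ball, mem_ball.mpr hdist⟩)
      set T := fderiv ℝ (gradient w) x₁ with hT
      -- the quadratic form of the Hessian at x₁ is ≤ a‖·‖²
      have hquad_le : ∀ h : EuclideanSpace ℝ (Fin n), (inner ℝ (T h) h : ℝ) ≤ a * ‖h‖ ^ 2 := by
        intro h
        set φ : ℝ → ℝ := fun t =>
          a / 2 * inner ℝ (x₁ + t • h - x₀) (x₁ + t • h - x₀) + C - w (x₁ + t • h) with hφ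
        have hline_cd : ContDiff ℝ 2 (fun t : ℝ => x₁ + t • h) :=
          contDiff_const.add (contDiff_id.smul contDiff_const)
        have hφ2 : ContDiff ℝ 2 φ := by
          apply ContDiff.sub
          · exact (contDiff_const.mul (ContDiff.inner ℝ (hline_cd.sub contDiff_const)
              (hline_cd.sub contDiff_const))).add contDiff_const
          · exact hw.comp hline_cd
        have hφmin : IsLocalMin φ 0 := by
          have htend : Tendsto (fun t : ℝ => x₁ + t • h) (𝓝 0) (𝓝 x₁) := by
            have := (hline_cd.continuous).tendsto 0
            simpa using this
          have hev : ∀ᶠ t in 𝓝 (0:ℝ), f x₁ ≤ f (x₁ + t • h) := htend.eventually hlocal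
          filter_upwards [hev] with t ht
          have hφ0 : φ 0 = f x₁ := by simp [hφ, hf]
          rw [hφ0]
          exact ht
        have h2 := MAaux.secondDeriv_nonneg_of_isLocalMin hφ2 hφmin
        rw [hφ] at h2
        rw [MAaux.deriv2_full hw x₀ x₁ h a C] at h2
        linarith
      -- the quadratic form of the Hessian at x₁ is ≥ 0 (convexity)
      have hquad_ge : ∀ h : EuclideanSpace ℝ (Fin n), (0:ℝ) ≤ inner ℝ (T h) h := by
        intro h
        set ψ : ℝ → ℝ := fun t => w (x₁ + t • h) with hψ
        have hline_cd : ContDiff ℝ 2 (fun t : ℝ => x₁ + t • h) :=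
          contDiff_const.add (contDiff_id.smul contDiff_const)
        have hψ2 : ContDiff ℝ 2 ψ := by rw [hψ]; exact hw.comp hline_cd
        have hψconv : ConvexOn ℝ Set.univ ψ := by
          have := hconv.comp_affineMap (AffineMap.lineMap x₁ (x₁ + h))
          have heq : (w ∘ (AffineMap.lineMap x₁ (x₁ + h))) = ψ := by
            funext t
            show w (AffineMap.lineMap x₁ (x₁ + h) t) = ψ t
            rw [hψ, AffineMap.lineMap_apply_module]
            congr 1
            module
          rw [heq] at this
          simpa using this
        have h0 := MAaux.convex_secondDeriv_nonneg hψ2 hψconv 0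
        -- relate second derivative of ψ to the Hessian using deriv2_full with a = 0, C = 0
        have hfull := MAaux.deriv2_full hw x₀ x₁ h 0 0
        have heq2 : (fun t : ℝ =>
            (0:ℝ) / 2 * inner ℝ (x₁ + t • h - x₀) (x₁ + t • h - x₀) + 0 - w (x₁ + t • h))
            = fun t => -ψ t := by
          funext t; simp [hψ]
        rw [heq2] at hfull
        have hneg1 : deriv (fun t : ℝ => -ψ t) = fun t => -deriv ψ t := by
          funext t; exact deriv.neg
        rw [hneg1] at hfull
        have hneg2 : deriv (fun t : ℝ => -deriv ψ t) 0 = -deriv (deriv ψ) 0 := deriv.neg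
        rw [hneg2] at hfull
        have : deriv (deriv ψ) 0 = inner ℝ (T h) h := by
          have := hfull
          rw [zero_mul] at this
          linarith
        linarith [this ▸ h0]
      -- determinant bound
      have hsym : T.toLinearMap.IsSymmetric := hT ▸ MAaux.gradient_fderiv_isSymmetric hw x₁
      have hdet_le : LinearMap.det (T.toLinearMap) ≤ a ^ n := by
        apply MAaux.det_le_pow_of_quadform finrank_euclideanSpace_fin hsym
        · intro v; simpa using hquad_ge v
        · intro v; simpa using hquad_le v
      have hcd := hdet x₁ hx₁
      rw [← hT] at hcd
      linarith
    -- conclude from the value at the center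
    have hfx₀ := hmin (mem_closedBall_self hr.le)
    have : f x₀ = δ - a / 2 * r ^ 2 := by
      rw [hf]; simp only; rw [hC]; simp; ring
    have h0 : 0 ≤ f x₀ := le_trans hfx₁ hfx₀
    rw [this] at h0
    linarith
  -- Step 2: pass to the limit a → c^{1/n}
  set b := c ^ ((n:ℝ)⁻¹) with hb_def
  have hb : 0 < b := Real.rpow_pos_of_pos hc _
  have hbn : b ^ n = c := Real.rpow_inv_natCast_pow hc.le hn.ne'
  have hbr : b * r ^ 2 ≤ 2 * δ := by
    have hev : ∀ᶠ t in 𝓝[<] (1:ℝ), t * (b * r ^ 2) ≤ 2 * δ := by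
      filter_upwards [Ioo_mem_nhdsLT_of_mem (⟨zero_lt_one, le_refl (1:ℝ)⟩ : (1:ℝ) ∈ Ioc 0 1)]
        with t ht
      have ht0 : 0 < t := ht.1
      have ht1 : t < 1 := ht.2
      have : (t * b) ^ n < c := by
        rw [mul_pow, hbn]
        have htn : t ^ n < 1 := pow_lt_one₀ ht0.le ht1 hn.ne'
        nlinarith
      have := key (t * b) (mul_pos ht0 hb) this
      linarith [this, mul_assoc t b (r ^ 2)]
    have htends : Tendsto (fun t : ℝ => t * (b * r ^ 2)) (𝓝[<] 1) (𝓝 (b * r ^ 2)) := by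
      have : Tendsto (fun t : ℝ => t * (b * r ^ 2)) (𝓝 1) (𝓝 (1 * (b * r ^ 2))) :=
        (continuous_id.mul continuous_const).tendsto 1
      rw [one_mul] at this
      exact this.mono_left nhdsWithin_le_nhds
    exact le_of_tendsto htends hev
  -- Step 3: rewrite the conclusion
  have hrpow : c ^ (-1 / (n:ℝ)) = b⁻¹ := by
    rw [neg_div, Real.rpow_neg hc.le, one_div, ← hb_def]
  have h3 : r ^ 2 ≤ 2 * δ / b :=
    (le_div_iff₀ hb).mpr (by linarith [mul_comm b (r ^ 2)])
  rw [div_eq_mul_inv] at h3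
  rw [hrpow]
  exact h3
end

section
/- Let w : ℝⁿ → ℝ be a convex function attaining its global minimum m = w(x₀) at x₀, and suppose the sublevel set {x : w(x) ≤ m + 1} is contained in the open ball B(x₀, R) for some R > 0. Then for all x ∈ ℝⁿ, w(x) ≥ m - 1 + ‖x - x₀‖ / R. -/
open Set Metric

/-- Let `w` be a convex function on `ℝⁿ` attaining its global minimum
`m = w x₀` at `x₀`, and suppose the sublevel set `{x | w x ≤ m + 1}` is contained in
the open ball `B(x₀, R)` with `R > 0`.  Then `w x ≥ m - 1 + ‖x - x₀‖ / R` for all `x`. -/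
theorem convex_linear_growth_of_sublevel_in_ball {n : ℕ}
    (w : EuclideanSpace ℝ (Fin n) → ℝ) (hconv : ConvexOn ℝ Set.univ w)
    (x₀ : EuclideanSpace ℝ (Fin n)) (hmin : ∀ x, w x₀ ≤ w x)
    (m : ℝ) (hm : m = w x₀)
    (R : ℝ) (hR : 0 < R)
    (hsub : {x | w x ≤ m + 1} ⊆ Metric.ball x₀ R) :
    ∀ x, m - 1 + ‖x - x₀‖ / R ≤ w x := by
  intro x
  set d := ‖x - x₀‖ with hd
  have hd0 : 0 ≤ d := norm_nonneg _
  rcases le_or_gt d R with h | h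
  · have h1 : d / R ≤ 1 := (div_le_one hR).2 h
    have := hmin x
    linarith
  · have hdpos : 0 < d := hR.trans h
    set t : ℝ := R / d with ht
    have ht0 : 0 < t := div_pos hR hdpos
    have ht1 : t < 1 := (div_lt_one hdpos).2 h
    set y := x₀ + t • (x - x₀) with hy
    have hyc : y = (1 - t) • x₀ + t • x := by
      rw [hy]; module
    have hconvy : w y ≤ (1 - t) * w x₀ + t * w x := by
      rw [hyc]
      exact hconv.2 (mem_univ x₀) (mem_univ x) (by linarith) ht0.le (by ring)
    have hyd : dist y x₀ = R := by
      rw [hy, dist_eq_norm]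
      rw [add_sub_cancel_left, norm_smul, Real.norm_eq_abs, abs_of_pos ht0, ht, ← hd,
        div_mul_cancel₀ _ hdpos.ne']
    have hynot : ¬ y ∈ Metric.ball x₀ R := by
      simp [Metric.mem_ball, hyd]
    have hwy : m + 1 < w y := by
      by_contra hcon
      exact hynot (hsub (le_of_not_gt hcon))
    have key : m + 1 < (1 - t) * m + t * w x := by
      rw [hm]; rw [hm] at hwy; linarith
    -- from key: 1 < t * (w x - m), t = R/d
    have h2 : 1 < t * (w x - m) := by nlinarith
    have h3 : d / R < w x - m := by
      rw [div_lt_iff₀ hR]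
      rw [ht] at h2
      have := (mul_lt_mul_iff_left₀ hdpos).2 h2
      calc d = 1 * d := (one_mul d).symm
        _ < R / d * (w x - m) * d := this
        _ = (w x - m) * R := by field_simp
    linarith
end

section
/- Let Δ ⊂ ℝⁿ be a compact convex set with nonempty interior containing the origin in its interior, let u₀ : ℝⁿ → ℝ be a smooth convex function with bounded gradient, ∇u₀(ℝⁿ) = int Δ and ∫_{ℝⁿ} e^{-u₀(x)} dx = vol(Δ). Let t ∈ (0,1) and let u : ℝⁿ → ℝ be a smooth function with everywhere positive-definite Hessian, ∇u(ℝⁿ) = int Δ and det(D²u(x)) = e^{-w(x)} for all x, where w := (1-t)u₀ + t·u, and suppose w(x) ≥ κ‖x‖ - C for some κ > 0, C ∈ ℝ. Then (1 / vol(Δ)) · ∫_{ℝⁿ} ∇u₀(x) · e^{-w(x)} dx = -(t/(1-t)) · P_c, where P_c = (∫_Δ y dy)/vol(Δ) is the barycenter of Δ. -/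
open MeasureTheory Set
open scoped RealInnerProductSpace


lemma aux_exp_dominated {κ s : ℝ} (hκ : 0 < κ) (m : ℝ) (hm : 0 < m) (hs : 0 ≤ s) :
    (1 + s) ^ m ≤ (max 1 (κ / m)⁻¹) ^ m * Real.exp (κ * s) := by
  set a := κ / m with ha
  have hapos : 0 < a := div_pos hκ hm
  set b := max 1 a⁻¹ with hb
  have hb1 : (1:ℝ) ≤ b := le_max_left _ _
  have hba : 1 ≤ b * a := by
    calc (1:ℝ) = a⁻¹ * a := (inv_mul_cancel₀ hapos.ne').symm
    _ ≤ b * a := by gcongr; exact le_max_right _ _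
  have h1 : 1 + s ≤ b * Real.exp (a * s) := by
    have h2 : a * s + 1 ≤ Real.exp (a * s) := Real.add_one_le_exp _
    calc 1 + s ≤ b + (b * a) * s := by nlinarith
    _ = b * (a * s + 1) := by ring
    _ ≤ b * Real.exp (a * s) := by nlinarith
  calc (1 + s) ^ m ≤ (b * Real.exp (a * s)) ^ m :=
        Real.rpow_le_rpow (by linarith) h1 hm.le
  _ = b ^ m * (Real.exp (a * s)) ^ m := Real.mul_rpow (by linarith) (Real.exp_pos _).le
  _ = b ^ m * Real.exp (κ * s) := by
      rw [← Real.exp_mul]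
      congr 1
      rw [ha, div_mul_eq_mul_div, div_mul_cancel₀ _ hm.ne']

lemma aux_integrable_exp_decay {n : ℕ} {κ C : ℝ} (hκ : 0 < κ)
    {w : EuclideanSpace ℝ (Fin n) → ℝ} (hw : Continuous w)
    (hgrowth : ∀ x, κ * ‖x‖ - C ≤ w x) :
    Integrable (fun x : EuclideanSpace ℝ (Fin n) ↦ Real.exp (-(w x))) := by
  have hm : (Module.finrank ℝ (EuclideanSpace ℝ (Fin n)) : ℝ) < (n + 1 : ℝ) := by
    simp [finrank_euclideanSpace]
  set m : ℝ := (n : ℝ) + 1 with hmdef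
  have hmpos : 0 < m := by positivity
  set b : ℝ := max 1 (κ / m)⁻¹ with hb
  refine Integrable.mono' (((integrable_one_add_norm hm).const_mul
    (Real.exp C * b ^ m))) ?_ (Filter.Eventually.of_forall fun x ↦ ?_)
  · exact (hw.neg.rexp).aestronglyMeasurable
  · rw [Real.norm_eq_abs, abs_of_pos (Real.exp_pos _)]
    have key := aux_exp_dominated hκ m hmpos (norm_nonneg x)
    have h1 : Real.exp (-(w x)) ≤ Real.exp C * Real.exp (-(κ * ‖x‖)) := by
      rw [← Real.exp_add]
      apply Real.exp_le_exp.2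
      have := hgrowth x; linarith
    have hpow : (0:ℝ) < (1 + ‖x‖) ^ m := Real.rpow_pos_of_pos (by positivity) _
    have h2 : Real.exp (-(κ * ‖x‖)) ≤ b ^ m * (1 + ‖x‖) ^ (-m) := by
      rw [Real.exp_neg, Real.rpow_neg (by positivity)]
      rw [← hb] at key
      calc (Real.exp (κ * ‖x‖))⁻¹ = 1 / Real.exp (κ * ‖x‖) := (one_div _).symm
      _ ≤ b ^ m / (1 + ‖x‖) ^ m := by
          rw [div_le_div_iff₀ (Real.exp_pos _) hpow]; linarith
      _ = b ^ m * ((1 + ‖x‖) ^ m)⁻¹ := by rw [div_eq_mul_inv]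
    calc Real.exp (-(w x)) ≤ Real.exp C * (b ^ m * (1 + ‖x‖) ^ (-m)) :=
          le_trans h1 (by nlinarith [Real.exp_pos C])
    _ = Real.exp C * b ^ m * (1 + ‖x‖) ^ (-m) := by ring

section Esec
variable {n : ℕ}
local notation "E" => EuclideanSpace ℝ (Fin n)

lemma aux_grad_contDiff {v : E → ℝ} (hv : ContDiff ℝ (⊤ : ℕ∞) v) :
    ContDiff ℝ (⊤ : ℕ∞) (gradient v) :=
  (InnerProductSpace.toDual ℝ E).symm.contDiff.comp (hv.fderiv_right (by exact_mod_cast le_top))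

lemma aux_grad_inj {u : E → ℝ} (hu : ContDiff ℝ (⊤ : ℕ∞) u)
    (hupos : ∀ x h, h ≠ 0 → 0 < ⟪(fderiv ℝ (gradient u) x) h, h⟫) :
    Function.Injective (gradient u) := by
  have hgc : ContDiff ℝ (⊤ : ℕ∞) (gradient u) := aux_grad_contDiff hu
  have hgd : Differentiable ℝ (gradient u) := hgc.differentiable (by simp)
  intro x y hxy
  by_contra hne
  set c : E := x - y with hc
  have hc0 : c ≠ 0 := sub_ne_zero.2 hne
  set φ : ℝ → ℝ := fun s ↦ ⟪c, gradient u (y + s • c)⟫ with hφ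
  have hder : ∀ s : ℝ, HasDerivAt φ
      ⟪c, (fderiv ℝ (gradient u) (y + s • c)) c⟫ s := by
    intro s
    have h1 : HasDerivAt (fun s : ℝ ↦ y + s • c) c s := by
      simpa using ((hasDerivAt_id s).smul_const c).const_add y
    have h2 : HasFDerivAt (gradient u) (fderiv ℝ (gradient u) (y + s • c)) (y + s • c) :=
      (hgd _).hasFDerivAt
    have h3 := h2.comp_hasDerivAt s h1
    exact (innerSL ℝ c).hasFDerivAt.comp_hasDerivAt s h3
  have hmono : StrictMono φ := by
    apply strictMono_of_deriv_pos
    intro s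
    rw [(hder s).deriv]
    have := hupos (y + s • c) c hc0
    rwa [real_inner_comm] at this
  have h01 : φ 0 < φ 1 := hmono zero_lt_one
  have e0 : φ 0 = ⟪c, gradient u y⟫ := by simp [hφ]
  have e1 : φ 1 = ⟪c, gradient u x⟫ := by simp [hφ, hc]
  rw [e0, e1, hxy] at h01
  exact lt_irrefl _ h01

lemma aux_cov {Δ : Set E} (hΔconv : Convex ℝ Δ)
    {u w : E → ℝ} (husmooth : ContDiff ℝ (⊤ : ℕ∞) u)
    (hupos : ∀ x h, h ≠ 0 → 0 < ⟪(fderiv ℝ (gradient u) x) h, h⟫)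
    (hugrad : Set.range (gradient u) = interior Δ)
    (hudet : ∀ x, LinearMap.det (fderiv ℝ (gradient u) x).toLinearMap
        = Real.exp (-(w x))) :
    (∫ x, Real.exp (-(w x)) • gradient u x) = ∫ y in Δ, y := by
  have hgc : ContDiff ℝ (⊤ : ℕ∞) (gradient u) := aux_grad_contDiff husmooth
  have hgd : Differentiable ℝ (gradient u) := hgc.differentiable (by simp)
  have key := integral_image_eq_integral_abs_det_fderiv_smul volume MeasurableSet.univ
    (f := gradient u) (f' := fun x ↦ fderiv ℝ (gradient u) x)
    (fun x _ ↦ (hgd x).hasFDerivAt.hasFDerivWithinAt)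
    ((aux_grad_inj husmooth hupos).injOn) id
  rw [image_univ, hugrad, setIntegral_univ] at key
  have h1 : (∫ x, |(fderiv ℝ (gradient u) x).det| • id (gradient u x))
      = ∫ x, Real.exp (-(w x)) • gradient u x := by
    congr 1; funext x
    rw [id, ContinuousLinearMap.det]
    rw [show ((fderiv ℝ (gradient u) x : E →ₗ[ℝ] E)) = (fderiv ℝ (gradient u) x).toLinearMap
      from rfl, hudet x, abs_of_pos (Real.exp_pos _)]
  have h2 : (∫ y in interior Δ, (id y : E)) = ∫ y in Δ, y := by
    apply setIntegral_congr_set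
    rw [MeasureTheory.ae_eq_set]
    constructor
    · rw [diff_eq_empty.2 interior_subset]; simp
    · apply measure_mono_null _ (hΔconv.addHaar_frontier volume)
      intro z hz
      exact ⟨subset_closure hz.1, hz.2⟩
  rw [← h2, key, h1]

end Esec


/-- key identity: Let `Δ ⊂ ℝⁿ` be a compact convex set with the origin
in its interior, `u₀` smooth convex with bounded gradient, `∇u₀(ℝⁿ) = int Δ` and
`∫ e^{-u₀} = vol Δ`.  Let `t ∈ (0,1)` and let `u` be smooth with positive-definite
Hessian, `∇u(ℝⁿ) = int Δ`, `det D²u = e^{-w}` where `w = (1-t)u₀ + t·u`, and suppose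
`w x ≥ κ‖x‖ - C` with `κ > 0`.  Then
`(1/vol Δ) ∫ ∇u₀ e^{-w} = -(t/(1-t)) • P_c`, `P_c` the barycenter of `Δ`. -/
theorem wang_zhu_key_identity {n : ℕ}
    (Δ : Set (EuclideanSpace ℝ (Fin n))) (hΔcpt : IsCompact Δ) (hΔconv : Convex ℝ Δ)
    (hΔ0 : (0 : EuclideanSpace ℝ (Fin n)) ∈ interior Δ)
    (u₀ : EuclideanSpace ℝ (Fin n) → ℝ) (hu₀smooth : ContDiff ℝ (⊤ : ℕ∞) u₀)
    (hu₀conv : ConvexOn ℝ Set.univ u₀)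
    (L : ℝ) (hu₀bdd : ∀ x, ‖gradient u₀ x‖ ≤ L)
    (hu₀grad : Set.range (gradient u₀) = interior Δ)
    (hu₀norm : (∫ x, Real.exp (-(u₀ x))) = (volume Δ).toReal)
    (t : ℝ) (ht : t ∈ Set.Ioo (0 : ℝ) 1)
    (u w : EuclideanSpace ℝ (Fin n) → ℝ) (husmooth : ContDiff ℝ (⊤ : ℕ∞) u)
    (hupos : ∀ x h, h ≠ 0 → 0 < ⟪(fderiv ℝ (gradient u) x) h, h⟫)
    (hugrad : Set.range (gradient u) = interior Δ)
    (hwdef : ∀ x, w x = (1 - t) * u₀ x + t * u x)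
    (hudet : ∀ x, LinearMap.det (fderiv ℝ (gradient u) x).toLinearMap
        = Real.exp (-(w x)))
    (κ C : ℝ) (hκ : 0 < κ) (hgrowth : ∀ x, κ * ‖x‖ - C ≤ w x) :
    (volume Δ).toReal⁻¹ • (∫ x, Real.exp (-(w x)) • gradient u₀ x)
      = -(t / (1 - t)) • ((volume Δ).toReal⁻¹ • ∫ y in Δ, y) := by
  have hu₀d : Differentiable ℝ u₀ := hu₀smooth.differentiable (by simp)
  have hud : Differentiable ℝ u := husmooth.differentiable (by simp)
  have hweq : w = fun x ↦ (1 - t) * u₀ x + t * u x := funext hwdef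
  have hwd : Differentiable ℝ w := by
    rw [hweq]; exact (hu₀d.const_mul _).add (hud.const_mul _)
  have Iw : Integrable (fun x ↦ Real.exp (-(w x))) :=
    aux_integrable_exp_decay hκ hwd.continuous hgrowth
  -- bound on gradient u
  obtain ⟨M, hM⟩ := isBounded_iff_forall_norm_le.1 hΔcpt.isBounded
  have hMu : ∀ x, ‖gradient u x‖ ≤ M := fun x ↦
    hM _ (interior_subset (hugrad ▸ mem_range_self x))
  have hg0c : Continuous (gradient u₀) := (aux_grad_contDiff hu₀smooth).continuous
  have hguc : Continuous (gradient u) := (aux_grad_contDiff husmooth).continuous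
  -- integrability of the vector integrands
  have I₀ : Integrable (fun x ↦ Real.exp (-(w x)) • gradient u₀ x) := by
    refine Integrable.mono' (Iw.const_mul L) ?_ (Filter.Eventually.of_forall fun x ↦ ?_)
    · exact ((hwd.continuous.neg.rexp).smul hg0c).aestronglyMeasurable
    · rw [norm_smul, Real.norm_eq_abs, abs_of_pos (Real.exp_pos _), mul_comm]
      exact mul_le_mul_of_nonneg_right (hu₀bdd x) (Real.exp_pos _).le
  have Iu : Integrable (fun x ↦ Real.exp (-(w x)) • gradient u x) := by
    refine Integrable.mono' (Iw.const_mul M) ?_ (Filter.Eventually.of_forall fun x ↦ ?_)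
    · exact ((hwd.continuous.neg.rexp).smul hguc).aestronglyMeasurable
    · rw [norm_smul, Real.norm_eq_abs, abs_of_pos (Real.exp_pos _), mul_comm]
      exact mul_le_mul_of_nonneg_right (hMu x) (Real.exp_pos _).le
  -- gradient/fderiv dictionary
  have hgi : ∀ (v₁ : EuclideanSpace ℝ (Fin n) → ℝ) x y,
      ⟪gradient v₁ x, y⟫ = fderiv ℝ v₁ x y := fun v₁ x y ↦
    InnerProductSpace.toDual_symm_apply
  -- derivative of exp(-w)
  have hfexp : ∀ x, HasFDerivAt (fun y ↦ Real.exp (-(w y)))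
      (Real.exp (-(w x)) • (-fderiv ℝ w x)) x := fun x ↦
    HasFDerivAt.exp ((hwd x).hasFDerivAt.neg)
  have hDw : ∀ x, fderiv ℝ w x = (1 - t) • fderiv ℝ u₀ x + t • fderiv ℝ u x := by
    intro x
    rw [hweq, fderiv_fun_add ((hu₀d x).const_mul _) ((hud x).const_mul _),
      fderiv_const_mul (hu₀d x), fderiv_const_mul (hud x)]
  -- the key scalar identity for every direction v
  have key : ∀ v : EuclideanSpace ℝ (Fin n),
      (1 - t) * (∫ x, ⟪v, Real.exp (-(w x)) • gradient u₀ x⟫)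
        + t * (∫ x, ⟪v, Real.exp (-(w x)) • gradient u x⟫) = 0 := by
    intro v
    have hptw : ∀ x, (1 - t) * ⟪v, Real.exp (-(w x)) • gradient u₀ x⟫
        + t * ⟪v, Real.exp (-(w x)) • gradient u x⟫
        = -(fderiv ℝ (fun y ↦ Real.exp (-(w y))) x v) := by
      intro x
      rw [(hfexp x).fderiv]
      simp only [ContinuousLinearMap.smul_apply, ContinuousLinearMap.neg_apply, hDw x,
        ContinuousLinearMap.add_apply, ContinuousLinearMap.coe_smul', Pi.smul_apply,
        real_inner_smul_right, smul_eq_mul]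
      rw [show (inner ℝ v (gradient u₀ x) : ℝ) = (fderiv ℝ u₀ x) v from by
          rw [← hgi u₀ x v]; exact real_inner_comm _ _,
        show (inner ℝ v (gradient u x) : ℝ) = (fderiv ℝ u x) v from by
          rw [← hgi u x v]; exact real_inner_comm _ _]
      ring
    have J₀ : Integrable (fun x ↦ ⟪v, Real.exp (-(w x)) • gradient u₀ x⟫) := by
      exact I₀.const_inner (𝕜 := ℝ) v
    have Ju : Integrable (fun x ↦ ⟪v, Real.exp (-(w x)) • gradient u x⟫) := by
      exact Iu.const_inner (𝕜 := ℝ) v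
    have Jw : Integrable (fun x ↦ fderiv ℝ (fun y ↦ Real.exp (-(w y))) x v) := by
      have : (fun x ↦ fderiv ℝ (fun y ↦ Real.exp (-(w y))) x v)
          = fun x ↦ -((1 - t) * ⟪v, Real.exp (-(w x)) • gradient u₀ x⟫
            + t * ⟪v, Real.exp (-(w x)) • gradient u x⟫) := by
        funext x; rw [hptw x, neg_neg]
      rw [this]
      exact ((J₀.const_mul _).add (Ju.const_mul _)).neg
    have hibp := integral_mul_fderiv_eq_neg_fderiv_mul_of_integrable
      (f := fun y ↦ Real.exp (-(w y))) (g := fun _ ↦ (1:ℝ)) (v := v)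
      (by simpa using Jw) (by simp)
      (by simpa using Iw)
      (fun x _ ↦ ((hwd x).neg.exp)) (fun x _ ↦ differentiableAt_const (1:ℝ))
    simp only [fderiv_fun_const, Pi.zero_apply, ContinuousLinearMap.zero_apply, mul_zero,
      mul_one, integral_zero] at hibp
    have h0 : (∫ x, fderiv ℝ (fun y ↦ Real.exp (-(w y))) x v) = 0 := by linarith [hibp]
    calc (1 - t) * (∫ x, ⟪v, Real.exp (-(w x)) • gradient u₀ x⟫)
          + t * (∫ x, ⟪v, Real.exp (-(w x)) • gradient u x⟫)
        = ∫ x, ((1 - t) * ⟪v, Real.exp (-(w x)) • gradient u₀ x⟫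
            + t * ⟪v, Real.exp (-(w x)) • gradient u x⟫) := by
          rw [integral_add (J₀.const_mul _) (Ju.const_mul _),
            integral_const_mul, integral_const_mul]
    _ = ∫ x, -(fderiv ℝ (fun y ↦ Real.exp (-(w y))) x v) := by
          congr 1; funext x; exact hptw x
    _ = 0 := by rw [integral_neg, h0, neg_zero]
  -- assemble the vector identity
  set A := ∫ x, Real.exp (-(w x)) • gradient u₀ x with hA
  set B := ∫ x, Real.exp (-(w x)) • gradient u x with hB
  have hvec : (1 - t) • A + t • B = 0 := by
    apply ext_inner_left ℝ
    intro v
    rw [inner_zero_right, inner_add_right, real_inner_smul_right, real_inner_smul_right,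
      hA, hB, ← integral_inner I₀ v, ← integral_inner Iu v]
    exact key v
  have hBΔ : B = ∫ y in Δ, y := aux_cov hΔconv husmooth hupos hugrad hudet
  have h1t : (1 : ℝ) - t ≠ 0 := by have := ht.2; intro h; linarith
  have hAval : A = ((1 - t)⁻¹ * (-t)) • B := by
    have : (1 - t) • A = -(t • B) := eq_neg_of_add_eq_zero_left hvec
    calc A = (1 - t)⁻¹ • ((1 - t) • A) := (inv_smul_smul₀ h1t A).symm
    _ = (1 - t)⁻¹ • (-(t • B)) := by rw [this]
    _ = ((1 - t)⁻¹ * (-t)) • B := by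
        rw [smul_neg, smul_smul]
        rw [show (1 - t)⁻¹ * t = -((1 - t)⁻¹ * -t) by ring, neg_smul, neg_neg]
  rw [hAval, hBΔ, smul_smul, smul_smul]
  congr 1
  field_simp
end

section
/- Let p₁, …, p_N be points in ℝⁿ, set M = max_α ‖p_α‖, and let u₀(x) = log(Σ_{α=1}^N e^{⟨p_α, x⟩}). Let v ∈ ℝⁿ satisfy ⟨v, p_α⟩ + 1 ≥ 0 for all α. Then for all x, δ ∈ ℝⁿ, e^{-2M‖δ‖} · (⟨v, ∇u₀(x)⟩ + 1) ≤ ⟨v, ∇u₀(x + δ)⟩ + 1 ≤ e^{2M‖δ‖} · (⟨v, ∇u₀(x)⟩ + 1). -/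
open Set
open scoped RealInnerProductSpace

open InnerProductSpace in

lemma lse_hasGradientAt {n N : ℕ} (hN : 0 < N) (p : Fin N → EuclideanSpace ℝ (Fin n))
    (y : EuclideanSpace ℝ (Fin n)) :
    HasGradientAt (fun x => Real.log (∑ α, Real.exp ⟪p α, x⟫))
      ((∑ α, Real.exp ⟪p α, y⟫)⁻¹ • ∑ α, Real.exp ⟪p α, y⟫ • p α) y := by
  haveI : Nonempty (Fin N) := Fin.pos_iff_nonempty.1 hN
  have hS : (0:ℝ) < ∑ α, Real.exp ⟪p α, y⟫ :=
    Finset.sum_pos (fun _ _ => Real.exp_pos _) Finset.univ_nonempty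
  have hF : HasFDerivAt (fun x => ∑ α, Real.exp ⟪p α, x⟫)
      (∑ α, Real.exp ⟪p α, y⟫ • (innerSL ℝ (p α))) y :=
    HasFDerivAt.fun_sum fun α _ => (innerSL ℝ (p α)).hasFDerivAt.exp
  have hlog := hF.log hS.ne'
  rw [hasGradientAt_iff_hasFDerivAt]
  convert hlog using 1
  ext w
  simp [toDual_apply_apply, inner_smul_left, inner_sum, inner_smul_right, real_inner_smul_left,
    ContinuousLinearMap.sum_apply, Finset.mul_sum]
  ext w
  simp [toDual_apply_apply, inner_smul_left, inner_sum, inner_smul_right, real_inner_smul_left,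
    ContinuousLinearMap.sum_apply, Finset.mul_sum]

lemma lse_pairing_formula {n N : ℕ} (hN : 0 < N) (p : Fin N → EuclideanSpace ℝ (Fin n))
    (u₀ : EuclideanSpace ℝ (Fin n) → ℝ)
    (hu₀ : ∀ x, u₀ x = Real.log (∑ α, Real.exp ⟪p α, x⟫))
    (v y : EuclideanSpace ℝ (Fin n)) :
    ⟪v, gradient u₀ y⟫ + 1
      = (∑ α, Real.exp ⟪p α, y⟫)⁻¹ * ∑ α, Real.exp ⟪p α, y⟫ * (⟪v, p α⟫ + 1) := by
  haveI : Nonempty (Fin N) := Fin.pos_iff_nonempty.1 hN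
  have hS : (0:ℝ) < ∑ α, Real.exp ⟪p α, y⟫ :=
    Finset.sum_pos (fun _ _ => Real.exp_pos _) Finset.univ_nonempty
  have hg : gradient u₀ y = (∑ α, Real.exp ⟪p α, y⟫)⁻¹ • ∑ α, Real.exp ⟪p α, y⟫ • p α := by
    have := lse_hasGradientAt hN p y
    have h2 : u₀ = fun x => Real.log (∑ α, Real.exp ⟪p α, x⟫) := funext hu₀
    rw [h2]
    exact this.gradient
  rw [hg, real_inner_smul_right, inner_sum]
  simp only [real_inner_smul_right, mul_add, mul_one, Finset.sum_add_distrib, mul_add]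
  rw [inv_mul_cancel₀ hS.ne']

lemma lse_lower {n N : ℕ} (p : Fin N → EuclideanSpace ℝ (Fin n))
    (M : ℝ) (hM : IsGreatest (Set.range fun α => ‖p α‖) M)
    (u₀ : EuclideanSpace ℝ (Fin n) → ℝ)
    (hu₀ : ∀ x, u₀ x = Real.log (∑ α, Real.exp ⟪p α, x⟫))
    (v : EuclideanSpace ℝ (Fin n)) (hv : ∀ α, 0 ≤ ⟪v, p α⟫ + 1)
    (x δ : EuclideanSpace ℝ (Fin n)) :
    Real.exp (-(2 * M * ‖δ‖)) * (⟪v, gradient u₀ x⟫ + 1)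
        ≤ ⟪v, gradient u₀ (x + δ)⟫ + 1 := by
  obtain ⟨α₀, hα₀⟩ := hM.1
  have hN : 0 < N := α₀.pos
  haveI : Nonempty (Fin N) := ⟨α₀⟩
  have hbound : ∀ α (z : EuclideanSpace ℝ (Fin n)), |⟪p α, z⟫| ≤ M * ‖z‖ := by
    intro α z
    calc |⟪p α, z⟫| ≤ ‖p α‖ * ‖z‖ := abs_real_inner_le_norm _ _
    _ ≤ M * ‖z‖ := by
      apply mul_le_mul_of_nonneg_right (hM.2 ⟨α, rfl⟩) (norm_nonneg _)
  have hS : ∀ z : EuclideanSpace ℝ (Fin n), (0:ℝ) < ∑ α, Real.exp ⟪p α, z⟫ :=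
    fun z => Finset.sum_pos (fun _ _ => Real.exp_pos _) Finset.univ_nonempty
  -- numerator bound: exp⟪p α, x+δ⟫ ≥ exp(-M‖δ‖) exp⟪p α,x⟫
  have hnum : ∀ α, Real.exp (-(M * ‖δ‖)) * Real.exp ⟪p α, x⟫ ≤ Real.exp ⟪p α, x + δ⟫ := by
    intro α
    rw [inner_add_right, ← Real.exp_add]
    apply Real.exp_le_exp.2
    have := (abs_le.1 (hbound α δ)).1
    linarith
  -- denominator bound: S(x+δ) ≤ exp(M‖δ‖) S(x)
  have hden : (∑ α, Real.exp ⟪p α, x + δ⟫) ≤ Real.exp (M * ‖δ‖) * ∑ α, Real.exp ⟪p α, x⟫ := by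
    rw [Finset.mul_sum]
    apply Finset.sum_le_sum
    intro α _
    rw [inner_add_right, Real.exp_add, mul_comm]
    apply mul_le_mul_of_nonneg_right _ (Real.exp_pos _).le
    exact Real.exp_le_exp.2 (abs_le.1 (hbound α δ)).2
  have hinv : Real.exp (-(M * ‖δ‖)) * (∑ α, Real.exp ⟪p α, x⟫)⁻¹
      ≤ (∑ α, Real.exp ⟪p α, x + δ⟫)⁻¹ := by
    rw [Real.exp_neg, ← mul_inv]
    exact inv_anti₀ (hS _) hden
  rw [lse_pairing_formula hN p u₀ hu₀ v, lse_pairing_formula hN p u₀ hu₀ v]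
  have key : ∀ α, Real.exp (-(2 * M * ‖δ‖)) *
      ((∑ β, Real.exp ⟪p β, x⟫)⁻¹ * (Real.exp ⟪p α, x⟫ * (⟪v, p α⟫ + 1)))
      ≤ (∑ β, Real.exp ⟪p β, x + δ⟫)⁻¹ * (Real.exp ⟪p α, x + δ⟫ * (⟪v, p α⟫ + 1)) := by
    intro α
    have h2 : Real.exp (-(2 * M * ‖δ‖))
        = Real.exp (-(M * ‖δ‖)) * Real.exp (-(M * ‖δ‖)) := by
      rw [← Real.exp_add]; ring_nf
    rw [h2]
    have hA : (0:ℝ) ≤ Real.exp (-(M * ‖δ‖)) * (∑ β, Real.exp ⟪p β, x⟫)⁻¹ :=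
      mul_nonneg (Real.exp_pos _).le (inv_nonneg.2 (hS x).le)
    calc Real.exp (-(M * ‖δ‖)) * Real.exp (-(M * ‖δ‖)) *
          ((∑ β, Real.exp ⟪p β, x⟫)⁻¹ * (Real.exp ⟪p α, x⟫ * (⟪v, p α⟫ + 1)))
        = (Real.exp (-(M * ‖δ‖)) * (∑ β, Real.exp ⟪p β, x⟫)⁻¹) *
          ((Real.exp (-(M * ‖δ‖)) * Real.exp ⟪p α, x⟫) * (⟪v, p α⟫ + 1)) := by ring
      _ ≤ (∑ β, Real.exp ⟪p β, x + δ⟫)⁻¹ *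
          ((Real.exp (-(M * ‖δ‖)) * Real.exp ⟪p α, x⟫) * (⟪v, p α⟫ + 1)) := by
          apply mul_le_mul_of_nonneg_right hinv
          exact mul_nonneg (mul_nonneg (Real.exp_pos _).le (Real.exp_pos _).le) (hv α)
      _ ≤ (∑ β, Real.exp ⟪p β, x + δ⟫)⁻¹ * (Real.exp ⟪p α, x + δ⟫ * (⟪v, p α⟫ + 1)) := by
          apply mul_le_mul_of_nonneg_left _ (inv_nonneg.2 (hS _).le)
          exact mul_le_mul_of_nonneg_right (hnum α) (hv α)
  calc Real.exp (-(2 * M * ‖δ‖)) *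
        ((∑ α, Real.exp ⟪p α, x⟫)⁻¹ * ∑ α, Real.exp ⟪p α, x⟫ * (⟪v, p α⟫ + 1))
      = ∑ α, Real.exp (-(2 * M * ‖δ‖)) *
        ((∑ β, Real.exp ⟪p β, x⟫)⁻¹ * (Real.exp ⟪p α, x⟫ * (⟪v, p α⟫ + 1))) := by
        rw [Finset.mul_sum, Finset.mul_sum]
    _ ≤ ∑ α, (∑ β, Real.exp ⟪p β, x + δ⟫)⁻¹ * (Real.exp ⟪p α, x + δ⟫ * (⟪v, p α⟫ + 1)) :=
        Finset.sum_le_sum fun α _ => key α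
    _ = (∑ α, Real.exp ⟪p α, x + δ⟫)⁻¹ * ∑ α, Real.exp ⟪p α, x + δ⟫ * (⟪v, p α⟫ + 1) := by
        rw [Finset.mul_sum]


theorem lse_gradient_pairing_comparison {n N : ℕ}
    (p : Fin N → EuclideanSpace ℝ (Fin n))
    (M : ℝ) (hM : IsGreatest (Set.range fun α => ‖p α‖) M)
    (u₀ : EuclideanSpace ℝ (Fin n) → ℝ)
    (hu₀ : ∀ x, u₀ x = Real.log (∑ α, Real.exp ⟪p α, x⟫))
    (v : EuclideanSpace ℝ (Fin n)) (hv : ∀ α, 0 ≤ ⟪v, p α⟫ + 1)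
    (x δ : EuclideanSpace ℝ (Fin n)) :
    Real.exp (-(2 * M * ‖δ‖)) * (⟪v, gradient u₀ x⟫ + 1)
        ≤ ⟪v, gradient u₀ (x + δ)⟫ + 1 ∧
    ⟪v, gradient u₀ (x + δ)⟫ + 1
        ≤ Real.exp (2 * M * ‖δ‖) * (⟪v, gradient u₀ x⟫ + 1) := by
  refine ⟨lse_lower p M hM u₀ hu₀ v hv x δ, ?_⟩
  have h := lse_lower p M hM u₀ hu₀ v hv (x + δ) (-δ)
  rw [add_neg_cancel_right, norm_neg] at h
  rw [Real.exp_neg] at h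
  rw [inv_mul_le_iff₀ (Real.exp_pos _)] at h
  linarith [h]
end
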